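/- Let G be a finite simple graph with maximum degree at most Δ, let K be a clique of size Δ in G, and suppose there exist two adjacent vertices u', v' outside K each having a neighbor in K. Then α(G) ≥ α(G − V(K)) + 1. -/

import Mathlib

open SimpleGraph

/-- A finset is independent in `G` if no two distinct members are adjacent. -/
def IsIndepFinset {V : Type*} (G : SimpleGraph V) (s : Finset V) : Prop :=
  ∀ v ∈ s, ∀ w ∈ s, v ≠ w → ¬ G.Adj v w

/-- The independence number: the largest cardinality of an independent finset. -/
noncomputable def indepNum {V : Type*} (G : SimpleGraph V) : ℕ :=
  sSup {n | ∃ s : Finset V, IsIndepFinset G s ∧ s.card = n}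

/-- The closed neighborhood of a vertex, as a finset. -/
def closedNbhd {V : Type*} [Fintype V] [DecidableEq V] (G : SimpleGraph V)
    [DecidableRel G.Adj] (v : V) : Finset V :=
  insert v (G.neighborFinset v)

lemma indep_set_nonempty {V : Type*} (G : SimpleGraph V) :
    {n | ∃ s : Finset V, IsIndepFinset G s ∧ s.card = n}.Nonempty :=
  ⟨0, ∅, fun v hv => absurd hv (Finset.notMem_empty v), rfl⟩

lemma indep_set_bdd {V : Type*} [Fintype V] (G : SimpleGraph V) :
    BddAbove {n | ∃ s : Finset V, IsIndepFinset G s ∧ s.card = n} :=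
  ⟨Fintype.card V, fun n ⟨s, _, hc⟩ => hc ▸ s.card_le_univ⟩

lemma exists_indep_card {V : Type*} [Fintype V] (G : SimpleGraph V) :
    ∃ s : Finset V, IsIndepFinset G s ∧ s.card = _root_.indepNum G :=
  Nat.sSup_mem (indep_set_nonempty G) (indep_set_bdd G)

theorem stmt_1 {V : Type*} [Fintype V] [DecidableEq V] (G : SimpleGraph V)
    [DecidableRel G.Adj] (Δ : ℕ) (hΔ : 1 ≤ Δ)
    (hdeg : ∀ v : V, G.degree v ≤ Δ)
    (K : Finset V) (hK : G.IsNClique Δ K)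
    (u' v' : V) (hu' : u' ∉ K) (hv' : v' ∉ K) (huv : G.Adj u' v')
    (hu'K : ∃ w ∈ K, G.Adj u' w) (hv'K : ∃ w ∈ K, G.Adj v' w) :
    _root_.indepNum (G.induce ((↑K : Set V)ᶜ)) + 1 ≤ _root_.indepNum G := by
  classical
  obtain ⟨s, hs, hcard⟩ := exists_indep_card (G.induce ((↑K : Set V)ᶜ))
  set T : Finset V := s.map ⟨Subtype.val, Subtype.val_injective⟩ with hT
  have hTcard : T.card = s.card := Finset.card_map _
  have hTK : ∀ x ∈ T, x ∉ K := by
    intro x hx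
    obtain ⟨⟨y, hy⟩, _, rfl⟩ := Finset.mem_map.mp hx
    simpa using hy
  have hTindep : ∀ v ∈ T, ∀ w ∈ T, v ≠ w → ¬ G.Adj v w := by
    intro v hv w hw hne hadj
    obtain ⟨a, ha, rfl⟩ := Finset.mem_map.mp hv
    obtain ⟨b, hb, rfl⟩ := Finset.mem_map.mp hw
    exact hs a ha b hb (fun h => hne (congrArg _ h)) hadj
  -- each vertex of K has at most one neighbor outside K
  have hout : ∀ k ∈ K, (G.neighborFinset k \ K).card ≤ 1 := by
    intro k hk
    have hsub : K.erase k ⊆ G.neighborFinset k ∩ K := by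
      intro x hx
      rw [Finset.mem_inter, SimpleGraph.mem_neighborFinset]
      refine ⟨(hK.1 hk (Finset.mem_of_mem_erase hx) ?_), Finset.mem_of_mem_erase hx⟩
      exact fun h => (Finset.ne_of_mem_erase hx) h.symm
    have h1 : (K.erase k).card ≤ (G.neighborFinset k ∩ K).card := Finset.card_le_card hsub
    have h2 : (K.erase k).card = Δ - 1 := by rw [Finset.card_erase_of_mem hk, hK.2]
    have h3 : (G.neighborFinset k \ K).card + (G.neighborFinset k ∩ K).card
        = (G.neighborFinset k).card := Finset.card_sdiff_add_card_inter _ _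
    have h4 : (G.neighborFinset k).card ≤ Δ := by
      rw [SimpleGraph.card_neighborFinset_eq_degree]; exact hdeg k
    omega
  by_cases hfree : ∃ k ∈ K, ∀ t ∈ T, ¬ G.Adj k t
  · obtain ⟨k, hk, hkT⟩ := hfree
    have hknot : k ∉ T := fun h => hTK k h hk
    have hindep : IsIndepFinset G (insert k T) := by
      intro a ha b hb hne hadj
      rcases Finset.mem_insert.mp ha with rfl | ha'
      · rcases Finset.mem_insert.mp hb with rfl | hb'
        · exact hne rfl
        · exact hkT b hb' hadj
      · rcases Finset.mem_insert.mp hb with rfl | hb'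
        · exact hkT a ha' hadj.symm
        · exact hTindep a ha' b hb' hne hadj
    have hcard' : (insert k T).card = _root_.indepNum (G.induce ((↑K : Set V)ᶜ)) + 1 := by
      rw [Finset.card_insert_of_notMem hknot, hTcard, hcard]
    calc _root_.indepNum (G.induce ((↑K : Set V)ᶜ)) + 1 = (insert k T).card := hcard'.symm
      _ ≤ _root_.indepNum G := le_csSup (indep_set_bdd G) ⟨insert k T, hindep, rfl⟩
  · exfalso
    push_neg at hfree
    -- u'' : u' must be in T
    have hmem : ∀ x : V, x ∉ K → (∃ w ∈ K, G.Adj x w) → x ∈ T := by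
      intro x hx ⟨w, hw, hxw⟩
      obtain ⟨t, ht, hwt⟩ := hfree w hw
      have hx1 : x ∈ G.neighborFinset w \ K := by
        rw [Finset.mem_sdiff, SimpleGraph.mem_neighborFinset]; exact ⟨hxw.symm, hx⟩
      have ht1 : t ∈ G.neighborFinset w \ K := by
        rw [Finset.mem_sdiff, SimpleGraph.mem_neighborFinset]; exact ⟨hwt, hTK t ht⟩
      have := Finset.card_le_one.mp (hout w hw) x hx1 t ht1
      rwa [this]
    have hu'T := hmem u' hu' hu'K
    have hv'T := hmem v' hv' hv'K
    exact hTindep u' hu'T v' hv'T huv.ne huv
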